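/- In the unified-xz-BB84 scheme, the map defined on orthonormal vectors by |0⟩_Ẽ|0_z⟩_A ↦ |E₁⟩|t'₋₁⟩ and |0⟩_Ẽ|1_z⟩_A ↦ |E₂⟩|t'₂⟩, with ⟨E₁|E₂⟩ = 0, is an isometry on its domain (hence extends to a unitary), and the resulting states, after passing through the interferometer U_IT extended to four input time modes t'₋₁, t'₀, t'₁, t'₂, have zero amplitude on every mode in J_error ∪ J_invalid for both the z-basis and x-basis interpretations; moreover the two Eve states |E₁⟩, |E₂⟩ are perfectly distinguishable. -/

import Mathlib

open Complex

/-- Amplitude of the (φ = 0) interferometer output at mode `m` (first component: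
`false` = straight arm `s`, `true` = down arm `d`; second component: time index)
for a single photon entering at input time mode `t'ᵢ`:
`|t'ᵢ⟩ ↦ (1/2)(|sᵢ⟩ − |s_{i+1}⟩ + i|dᵢ⟩ + i|d_{i+1}⟩)`. -/
noncomputable def amp0 (i : ℤ) : Bool × ℤ → ℂ := fun m =>
  if m.1 then
    (I / 2) * ((if m.2 = i then 1 else 0) + (if m.2 = i + 1 then 1 else 0))
  else
    (1 / 2) * ((if m.2 = i then 1 else 0) - (if m.2 = i + 1 then 1 else 0))

lemma amp0_zero (i : ℤ) (m : Bool × ℤ) (h1 : m.2 ≠ i) (h2 : m.2 ≠ i + 1) :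
    amp0 i m = 0 := by
  simp [amp0, h1, h2]

/-- The reversed-space attack on unified-xz-BB84: Eve maps `|0⟩_Ẽ|0_z⟩` to
`|E₁⟩|t'₋₁⟩` and `|0⟩_Ẽ|1_z⟩` to `|E₂⟩|t'₂⟩` with `⟨E₁|E₂⟩ = 0`.  The joint
states `Ψ b` after Bob's interferometer (`Ψ b m = amp0 (±) m • E_b`) form an
orthonormal pair (so the attack is an isometry on its domain and extends to a
unitary), and have zero amplitude on every mode of `J_error ∪ J_invalid` for
both interpretations: for bit 0 on modes `s₂, d₂` (z-errors) and `s₁, d₁`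
(x-basis outcomes), for bit 1 on `s₀, d₀` and `s₁, d₁`.  Moreover the Eve
markers `E₁, E₂` are perfectly distinguishable (orthogonal). -/
theorem stmt8 {F : Type*} [NormedAddCommGroup F] [InnerProductSpace ℂ F]
    (E₁ E₂ : F) (hE₁ : ‖E₁‖ = 1) (hE₂ : ‖E₂‖ = 1)
    (hortho : (inner ℂ E₁ E₂ : ℂ) = 0)
    (Ψ : Bool → Bool × ℤ → F)
    (hΨ : ∀ b m, Ψ b m = amp0 (if b then 2 else -1) m • (if b then E₂ else E₁)) :
    (∀ b b' : Bool,
      ∑ᶠ m : Bool × ℤ, (inner ℂ (Ψ b m) (Ψ b' m) : ℂ) = if b = b' then 1 else 0) ∧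
    (∀ b : Bool, ∀ a : Bool,
      Ψ b (a, 1) = 0 ∧ Ψ b (a, if b then 0 else 2) = 0) ∧
    (inner ℂ E₁ E₂ : ℂ) = 0 := by
  have hortho' : (inner ℂ E₂ E₁ : ℂ) = 0 := by
    rw [← inner_conj_symm, hortho, map_zero]
  have hE₁' : (inner ℂ E₁ E₁ : ℂ) = 1 := by
    rw [inner_self_eq_norm_sq_to_K, hE₁]; norm_num
  have hE₂' : (inner ℂ E₂ E₂ : ℂ) = 1 := by
    rw [inner_self_eq_norm_sq_to_K, hE₂]; norm_num
  refine ⟨?_, ?_, hortho⟩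
  · intro b b'
    set S : Finset (Bool × ℤ) :=
      ({false, true} : Finset Bool) ×ˢ ({-1, 0, 2, 3} : Finset ℤ) with hS
    have hsub : (Function.support fun m => (inner ℂ (Ψ b m) (Ψ b' m) : ℂ)) ⊆ ↑S := by
      intro m hm
      simp only [Function.mem_support] at hm
      by_contra hmS
      apply hm
      have ht : m.2 ≠ -1 ∧ m.2 ≠ 0 ∧ m.2 ≠ 2 ∧ m.2 ≠ 3 := by
        by_contra h
        push_neg at h
        refine hmS ?_
        have hmem : m ∈ S := by
          rw [hS, Finset.mem_product]
          refine ⟨by cases m.1 <;> simp, ?_⟩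
          simp only [Finset.mem_insert, Finset.mem_singleton]
          tauto
        exact hmem
      obtain ⟨h1, h2, h3, h4⟩ := ht
      have : Ψ b m = 0 := by
        rw [hΨ]
        cases b <;> rw [amp0_zero _ _ (by omega) (by omega), zero_smul]
      rw [this, inner_zero_left]
    rw [finsum_eq_finset_sum_of_support_subset _ hsub]
    cases b <;> cases b' <;>
      · simp only [hΨ, hS, Bool.false_eq_true, if_false, if_true,
          inner_smul_left, inner_smul_right, hortho, hortho', hE₁', hE₂']
        rw [Finset.sum_product]
        simp [amp0]
        try norm_num [Complex.ext_iff, Complex.div_re, Complex.div_im, Complex.normSq]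
  · intro b a
    cases b <;> constructor <;>
      · rw [hΨ]
        rw [amp0_zero _ _ (by norm_num) (by norm_num), zero_smul]
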